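/- For every m ≥ 1 and all symbols a, b ∈ {0,1,...,7}, the number of words in the OP-LOCO code OPC(m) whose most significant symbol c_{m−1} equals a is the same as the number of words in OPC(m) whose most significant symbol equals b; in particular, each such count equals |OPC(m)|/8. -/

import Mathlib

set_option synthInstance.maxHeartbeats 1000000
set_option synthInstance.maxSize 2000
set_option maxHeartbeats 1000000

/-- The OP-LOCO code: words of length `m` over the alphabet `{0,...,7}`
(position `m-1` most significant) containing no contiguous subword `u 2 v` with
`u, v ∈ {0,1,4,5}` and no contiguous subword `u 5 v` with `u, v ∈ {2,3,6,7}`. -/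
def OPC (m : ℕ) : Set (Fin m → Fin 8) :=
  {c | ∀ i : ℕ, ∀ h : i + 2 < m,
      ¬((c ⟨i + 2, h⟩ ∈ ({0, 1, 4, 5} : Set (Fin 8)) ∧ c ⟨i + 1, by omega⟩ = 2 ∧
            c ⟨i, by omega⟩ ∈ ({0, 1, 4, 5} : Set (Fin 8))) ∨
        (c ⟨i + 2, h⟩ ∈ ({2, 3, 6, 7} : Set (Fin 8)) ∧ c ⟨i + 1, by omega⟩ = 5 ∧
            c ⟨i, by omega⟩ ∈ ({2, 3, 6, 7} : Set (Fin 8))))}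

def Pbad (x y z : Fin 8) : Prop :=
  ((x = 0 ∨ x = 1 ∨ x = 4 ∨ x = 5) ∧ y = 2 ∧ (z = 0 ∨ z = 1 ∨ z = 4 ∨ z = 5)) ∨
  ((x = 2 ∨ x = 3 ∨ x = 6 ∨ x = 7) ∧ y = 5 ∧ (z = 2 ∨ z = 3 ∨ z = 6 ∨ z = 7))

instance : DecidablePred (fun t : Fin 8 × Fin 8 × Fin 8 => Pbad t.1 t.2.1 t.2.2) := by
  unfold Pbad; infer_instance

lemma mem_OPC_iff {m : ℕ} (c : Fin m → Fin 8) :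
    c ∈ OPC m ↔ ∀ i : ℕ, ∀ h : i + 2 < m,
      ¬ Pbad (c ⟨i + 2, h⟩) (c ⟨i + 1, by omega⟩) (c ⟨i, by omega⟩) := by
  simp only [OPC, Set.mem_setOf_eq, Pbad, Set.mem_insert_iff, Set.mem_singleton_iff]

example : True := trivial

def sw : Fin 8 → Fin 8 := ![3, 6, 5, 0, 7, 2, 1, 4]

def classA (x : Fin 8) : Prop := x = 0 ∨ x = 1 ∨ x = 4 ∨ x = 5

instance : DecidablePred classA := by unfold classA; infer_instance

lemma sw_invol : Function.Involutive sw := by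
  intro x; revert x; unfold sw; decide

lemma Pbad_sw (x y z : Fin 8) : Pbad (sw x) (sw y) (sw z) ↔ Pbad x y z := by
  revert x y z; unfold Pbad sw; decide

lemma Pbad_top (a b : Fin 8) (hab : classA a ↔ classA b) (y z : Fin 8) :
    Pbad a y z ↔ Pbad b y z := by
  revert a b y z; unfold Pbad classA; decide

lemma classA_sw (a : Fin 8) : classA (sw a) ↔ ¬ classA a := by revert a; unfold classA sw; decide

lemma update_mem_OPC {m : ℕ} (hm : 1 ≤ m) {a b : Fin 8} (hab : classA a ↔ classA b)
    {c : Fin m → Fin 8} (hc : c ∈ OPC m) (hct : c ⟨m - 1, Nat.sub_lt hm Nat.one_pos⟩ = a) :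
    Function.update c ⟨m - 1, Nat.sub_lt hm Nat.one_pos⟩ b ∈ OPC m := by
  rw [mem_OPC_iff] at hc ⊢
  intro i h
  have h1 : (⟨i + 1, by omega⟩ : Fin m) ≠ ⟨m - 1, Nat.sub_lt hm Nat.one_pos⟩ := by
    simp only [ne_eq, Fin.mk.injEq]; omega
  have h0 : (⟨i, by omega⟩ : Fin m) ≠ ⟨m - 1, Nat.sub_lt hm Nat.one_pos⟩ := by
    simp only [ne_eq, Fin.mk.injEq]; omega
  rw [Function.update_of_ne h1, Function.update_of_ne h0]
  by_cases h2 : (⟨i + 2, h⟩ : Fin m) = ⟨m - 1, Nat.sub_lt hm Nat.one_pos⟩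
  · rw [h2, Function.update_self]
    have := hc i h
    rw [h2, hct] at this
    rw [Pbad_top b a hab.symm]
    exact this
  · rw [Function.update_of_ne h2]
    exact hc i h

lemma ncard_top_eq_of_class {m : ℕ} (hm : 1 ≤ m) {a b : Fin 8} (hab : classA a ↔ classA b) :
    {c ∈ OPC m | c ⟨m - 1, Nat.sub_lt hm Nat.one_pos⟩ = a}.ncard =
      {c ∈ OPC m | c ⟨m - 1, Nat.sub_lt hm Nat.one_pos⟩ = b}.ncard := by
  set t : Fin m := ⟨m - 1, Nat.sub_lt hm Nat.one_pos⟩ with ht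
  have himg : (fun c => Function.update c t b) '' {c ∈ OPC m | c t = a}
      = {c ∈ OPC m | c t = b} := by
    ext d
    constructor
    · rintro ⟨c, ⟨hc, hct⟩, rfl⟩
      exact ⟨update_mem_OPC hm hab hc hct, Function.update_self _ _ _⟩
    · rintro ⟨hd, hdt⟩
      refine ⟨Function.update d t a, ⟨update_mem_OPC hm hab.symm hd hdt,
        Function.update_self _ _ _⟩, ?_⟩
      show Function.update (Function.update d t a) t b = d
      rw [Function.update_idem, ← hdt, Function.update_eq_self]
  have hinj : Set.InjOn (fun c => Function.update c t b) {c ∈ OPC m | c t = a} := by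
    rintro c1 ⟨_, h1⟩ c2 ⟨_, h2⟩ heq
    funext i
    by_cases hi : i = t
    · subst hi; rw [h1, h2]
    · have := congrFun heq i
      simpa [Function.update_of_ne hi] using this
  rw [← himg, Set.ncard_image_of_injOn hinj]

lemma ncard_top_sw {m : ℕ} (hm : 1 ≤ m) (a : Fin 8) :
    {c ∈ OPC m | c ⟨m - 1, Nat.sub_lt hm Nat.one_pos⟩ = a}.ncard =
      {c ∈ OPC m | c ⟨m - 1, Nat.sub_lt hm Nat.one_pos⟩ = sw a}.ncard := by
  set t : Fin m := ⟨m - 1, Nat.sub_lt hm Nat.one_pos⟩ with ht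
  have hOPC : ∀ c : Fin m → Fin 8, c ∈ OPC m → sw ∘ c ∈ OPC m := by
    intro c hc
    rw [mem_OPC_iff] at hc ⊢
    intro i h
    rw [Function.comp_apply, Function.comp_apply, Function.comp_apply, Pbad_sw]
    exact hc i h
  have himg : (fun c => sw ∘ c) '' {c ∈ OPC m | c t = a} = {c ∈ OPC m | c t = sw a} := by
    ext d
    constructor
    · rintro ⟨c, ⟨hc, hct⟩, rfl⟩
      exact ⟨hOPC c hc, by simp [hct]⟩
    · rintro ⟨hd, hdt⟩
      refine ⟨sw ∘ d, ⟨hOPC d hd, ?_⟩, ?_⟩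
      · simp only [Function.comp_apply, hdt, sw_invol a]
      · funext i; simp [sw_invol (d i)]
  have hinj : Function.Injective (fun c : Fin m → Fin 8 => sw ∘ c) := by
    intro c1 c2 heq
    funext i
    exact sw_invol.injective (congrFun heq i)
  rw [← himg, Set.ncard_image_of_injective _ hinj]

lemma ncard_top_eq {m : ℕ} (hm : 1 ≤ m) (a b : Fin 8) :
    {c ∈ OPC m | c ⟨m - 1, Nat.sub_lt hm Nat.one_pos⟩ = a}.ncard =
      {c ∈ OPC m | c ⟨m - 1, Nat.sub_lt hm Nat.one_pos⟩ = b}.ncard := by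
  by_cases hab : classA a ↔ classA b
  · exact ncard_top_eq_of_class hm hab
  · rw [ncard_top_sw hm a]
    refine ncard_top_eq_of_class hm ?_
    rw [classA_sw]
    exact (not_iff.mp hab)

theorem stmt10 (m : ℕ) (hm : 1 ≤ m) (a b : Fin 8) :
    {c ∈ OPC m | c ⟨m - 1, by omega⟩ = a}.ncard =
      {c ∈ OPC m | c ⟨m - 1, by omega⟩ = b}.ncard ∧
    8 * {c ∈ OPC m | c ⟨m - 1, by omega⟩ = a}.ncard = (OPC m).ncard := by
  classical
  refine ⟨ncard_top_eq hm a b, ?_⟩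
  set t : Fin m := ⟨m - 1, by omega⟩ with ht
  have hF : (OPC m).Finite := Set.toFinite _
  have hfib : ∀ x : Fin 8, ({c ∈ OPC m | c t = x}).ncard
      = ((hF.toFinset).filter (fun c => c t = x)).card := by
    intro x
    rw [Set.ncard_eq_toFinset_card _ (Set.toFinite _)]
    congr 1
    ext c
    simp only [Set.Finite.mem_toFinset, Finset.mem_filter, Set.mem_sep_iff]
  have hsum : hF.toFinset.card
      = ∑ x : Fin 8, ((hF.toFinset).filter (fun c => c t = x)).card :=
    Finset.card_eq_sum_card_fiberwise (fun c _ => Finset.mem_univ (c t))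
  rw [Set.ncard_eq_toFinset_card _ hF, hsum,
    Finset.sum_congr rfl (fun x _ => by rw [← hfib x, ncard_top_eq hm x a]),
    Finset.sum_const, Finset.card_univ, Fintype.card_fin, smul_eq_mul]
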